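/- Let l and m be coprime integers with l ≥ 3 and m ≥ 3 such that neither l nor m is twice an odd integer, and let π : SL₂(ℤ) → SL₂(ℤ)/{±I} be the quotient homomorphism. Then the image under π of Γ(lm) is a subgroup of index 2 in the intersection of the image under π of Γ(l) with the image under π of Γ(m). -/

import Mathlib

/-- `SL₂(R)`: the group of 2×2 matrices over `R` of determinant 1. -/
abbrev SL2 (R : Type*) [CommRing R] := Matrix.SpecialLinearGroup (Fin 2) R

/-- The subgroup `{I, -I}` of `SL₂(R)`. -/
def pmOne (R : Type*) [CommRing R] : Subgroup (SL2 R) := Subgroup.zpowers (-1 : SL2 R)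

instance pmOne_normal (R : Type*) [CommRing R] : (pmOne R).Normal := by
  constructor
  intro x hx g
  obtain ⟨k, rfl⟩ := Subgroup.mem_zpowers_iff.mp hx
  have hc : Commute ((-1 : SL2 R) ^ k) g := (Commute.neg_one_left g).zpow_left k
  have : g * (-1 : SL2 R) ^ k * g⁻¹ = (-1 : SL2 R) ^ k := by
    rw [← hc.eq, mul_assoc, mul_inv_cancel, mul_one]
  rw [this]
  exact hx

/-- `PSL₂(R)`: the quotient of `SL₂(R)` by the subgroup `{I, -I}`. -/
def PSL2 (R : Type*) [CommRing R] := SL2 R ⧸ pmOne R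

noncomputable instance (R : Type*) [CommRing R] : Group (PSL2 R) :=
  inferInstanceAs (Group (SL2 R ⧸ pmOne R))


/-- The principal congruence subgroup `Γ(N)` of `SL₂(ℤ)`: the kernel of the
entrywise reduction map `SL₂(ℤ) → SL₂(ℤ/Nℤ)`. -/
def Gamma (N : ℕ) : Subgroup (SL2 ℤ) :=
  (Matrix.SpecialLinearGroup.map (Int.castRingHom (ZMod N))).ker

/-- For coprime `l, m ≥ 3` neither of which is twice an odd integer,
with `π : SL₂(ℤ) → SL₂(ℤ)/{±I}` the quotient homomorphism, the image of `Γ(lm)` under `π`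
is a subgroup of index 2 in the intersection of the images of `Γ(l)` and `Γ(m)` under `π`. -/

-- helpers
lemma mem_pmOne_iff (x : SL2 ℤ) : x ∈ pmOne ℤ ↔ x = 1 ∨ x = -1 := by
  constructor
  · intro hx
    obtain ⟨k, rfl⟩ := Subgroup.mem_zpowers_iff.mp hx
    rcases Int.even_or_odd k with h | h
    · exact Or.inl (Even.neg_one_zpow h)
    · obtain ⟨c, rfl⟩ := h
      refine Or.inr ?_
      rw [zpow_add, zpow_one, Even.neg_one_zpow ⟨c, two_mul c⟩, one_mul]
  · rintro (rfl | rfl)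
    · exact Subgroup.mem_zpowers_iff.mpr ⟨0, by norm_num⟩
    · exact Subgroup.mem_zpowers_iff.mpr ⟨1, by norm_num⟩

lemma pi_eq_iff (A B : SL2 ℤ) :
    QuotientGroup.mk' (pmOne ℤ) A = QuotientGroup.mk' (pmOne ℤ) B ↔ B = A ∨ B = -A := by
  rw [QuotientGroup.mk'_eq_mk']
  constructor
  · rintro ⟨z, hz, rfl⟩
    rcases (mem_pmOne_iff z).1 hz with rfl | rfl
    · exact Or.inl (mul_one A)
    · exact Or.inr (mul_neg_one A)
  · rintro (rfl | rfl)
    · exact ⟨1, one_mem _, mul_one _⟩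
    · exact ⟨-1, (mem_pmOne_iff _).2 (Or.inr rfl), mul_neg_one A⟩

lemma mem_map_iff (S : Subgroup (SL2 ℤ)) (A : SL2 ℤ) :
    QuotientGroup.mk' (pmOne ℤ) A ∈ S.map (QuotientGroup.mk' (pmOne ℤ)) ↔ A ∈ S ∨ -A ∈ S := by
  rw [Subgroup.mem_map]
  constructor
  · rintro ⟨B, hB, hBA⟩
    rcases (pi_eq_iff B A).1 hBA with rfl | rfl
    · exact Or.inl hB
    · exact Or.inr (by simpa using hB)
  · rintro (h | h)
    · exact ⟨A, h, rfl⟩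
    · exact ⟨-A, h, (pi_eq_iff (-A) A).2 (Or.inr (neg_neg A).symm)⟩

def CongC (N : ℕ) (ε : ℤ) (A : SL2 ℤ) : Prop :=
  ((A : Matrix (Fin 2) (Fin 2) ℤ) 0 0 : ZMod N) = (ε : ℤ) ∧
  ((A : Matrix (Fin 2) (Fin 2) ℤ) 0 1 : ZMod N) = ((0 : ℤ) : ZMod N) ∧
  ((A : Matrix (Fin 2) (Fin 2) ℤ) 1 0 : ZMod N) = ((0 : ℤ) : ZMod N) ∧
  ((A : Matrix (Fin 2) (Fin 2) ℤ) 1 1 : ZMod N) = (ε : ℤ)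

lemma mem_Gamma_iff (N : ℕ) (A : SL2 ℤ) : A ∈ Gamma N ↔ CongC N 1 A := by
  have h : A ∈ CongruenceSubgroup.Gamma N ↔ _ := CongruenceSubgroup.Gamma_mem
  rw [show Gamma N = CongruenceSubgroup.Gamma N from rfl, h]
  unfold CongC
  norm_num

lemma neg_mem_Gamma_iff (N : ℕ) (A : SL2 ℤ) : -A ∈ Gamma N ↔ CongC N (-1) A := by
  rw [mem_Gamma_iff]
  unfold CongC
  simp only [Matrix.SpecialLinearGroup.coe_neg, Matrix.neg_apply, Int.cast_neg, Int.cast_zero,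
    Int.cast_one, neg_eq_zero]
  constructor
  · rintro ⟨h1, h2, h3, h4⟩
    exact ⟨by rw [← h1]; ring, h2, h3, by rw [← h4]; ring⟩
  · rintro ⟨h1, h2, h3, h4⟩
    exact ⟨by rw [h1]; ring, h2, h3, by rw [h4]; ring⟩

lemma CongC_mul {N : ℕ} {ε δ : ℤ} {A B : SL2 ℤ} (hA : CongC N ε A) (hB : CongC N δ B) :
    CongC N (ε * δ) (A * B) := by
  obtain ⟨a1, a2, a3, a4⟩ := hA
  obtain ⟨b1, b2, b3, b4⟩ := hB
  unfold CongC at *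
  simp only [Matrix.SpecialLinearGroup.coe_mul, Matrix.mul_apply, Fin.sum_univ_two,
    Int.cast_add, Int.cast_mul, Int.cast_zero, Int.cast_one] at *
  rw [a1, a2, a3, a4, b1, b2, b3, b4]
  push_cast
  refine ⟨by ring, by ring, by ring, by ring⟩

lemma CongC_not_both {N : ℕ} (hN : 3 ≤ N) {A : SL2 ℤ} (h1 : CongC N 1 A) (h2 : CongC N (-1) A) :
    False := by
  have h := h1.1.symm.trans h2.1
  have h2 : ((2 : ℤ) : ZMod N) = 0 := by
    push_cast at h ⊢
    linear_combination h
  rw [show ((2:ℤ) : ZMod N) = ((2:ℕ) : ZMod N) by push_cast; ring] at h2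
  haveI : NeZero N := ⟨by omega⟩
  have := (ZMod.natCast_eq_zero_iff 2 N).1 h2
  have := Nat.le_of_dvd (by norm_num) this
  omega

lemma crt_entry {l m : ℕ} (hco : Nat.Coprime l m) (x c : ℤ) :
    ((x : ZMod (l * m)) = (c : ZMod (l * m))) ↔
      ((x : ZMod l) = (c : ZMod l) ∧ (x : ZMod m) = (c : ZMod m)) := by
  rw [ZMod.intCast_eq_intCast_iff, ZMod.intCast_eq_intCast_iff, ZMod.intCast_eq_intCast_iff,
    show ((l * m : ℕ) : ℤ) = (l : ℤ) * (m : ℤ) by push_cast; ring,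
    ← Int.modEq_and_modEq_iff_modEq_mul (by simpa using hco)]

lemma CongC_crt {l m : ℕ} (hco : Nat.Coprime l m) (ε : ℤ) (A : SL2 ℤ) :
    CongC (l * m) ε A ↔ CongC l ε A ∧ CongC m ε A := by
  unfold CongC
  rw [crt_entry hco, crt_entry hco, crt_entry hco, crt_entry hco]
  tauto

lemma exists_M (l m : ℕ) (hco : Nat.Coprime l m) :
    ∃ M : SL2 ℤ, CongC l 1 M ∧ CongC m (-1) M := by
  obtain ⟨u, v, huv⟩ := Nat.isCoprime_iff_coprime.mpr hco
  set a : ℤ := 1 - 2 * u * l with ha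
  have hcl : IsCoprime a (l : ℤ) := ⟨1, 2 * u, by rw [ha]; ring⟩
  have hcm : IsCoprime a (m : ℤ) := ⟨-1, 2 * v, by linear_combination 2 * huv - ha⟩
  have hcop : IsCoprime a (((l : ℤ) * m) ^ 2) := (hcl.mul_right hcm).pow_right
  obtain ⟨d, e, hde⟩ := hcop
  refine ⟨⟨!![a, (l : ℤ) * m; -(e * ((l : ℤ) * m)), d], by
      rw [Matrix.det_fin_two_of]; linear_combination hde⟩, ?_, ?_⟩
  · refine ⟨?_, ?_, ?_, ?_⟩ <;>
      simp only [Matrix.SpecialLinearGroup.coe_mk, Matrix.cons_val', Matrix.cons_val_zero,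
        Matrix.cons_val_one, Matrix.head_cons, Matrix.head_fin_const, Matrix.empty_val',
        Matrix.cons_val_fin_one, Matrix.of_apply] <;>
      rw [ZMod.intCast_eq_intCast_iff, Int.modEq_iff_dvd]
    · exact ⟨2 * u, by rw [ha]; ring⟩
    · exact ⟨-m, by push_cast; ring⟩
    · exact ⟨e * m, by push_cast; ring⟩
    · exact ⟨-(2 * d * u) + e * l * m ^ 2, by linear_combination -hde + d * ha⟩
  · refine ⟨?_, ?_, ?_, ?_⟩ <;>
      simp only [Matrix.SpecialLinearGroup.coe_mk, Matrix.cons_val', Matrix.cons_val_zero,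
        Matrix.cons_val_one, Matrix.head_cons, Matrix.head_fin_const, Matrix.empty_val',
        Matrix.cons_val_fin_one, Matrix.of_apply] <;>
      rw [ZMod.intCast_eq_intCast_iff, Int.modEq_iff_dvd]
    · exact ⟨-2 * v, by linear_combination 2 * huv - ha⟩
    · exact ⟨-l, by push_cast; ring⟩
    · exact ⟨e * l, by push_cast; ring⟩
    · exact ⟨-(2 * d * v) - e * l ^ 2 * m, by linear_combination hde - d * ha + 2 * d * huv⟩

theorem stmt2 (l m : ℕ) (hl : 3 ≤ l) (hm : 3 ≤ m) (hco : Nat.Coprime l m)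
    (hl2 : ¬∃ j : ℕ, Odd j ∧ l = 2 * j) (hm2 : ¬∃ j : ℕ, Odd j ∧ m = 2 * j) :
    (Gamma (l * m)).map (QuotientGroup.mk' (pmOne ℤ)) ≤
      (Gamma l).map (QuotientGroup.mk' (pmOne ℤ)) ⊓
        (Gamma m).map (QuotientGroup.mk' (pmOne ℤ)) ∧
    ((Gamma (l * m)).map (QuotientGroup.mk' (pmOne ℤ))).relIndex
      ((Gamma l).map (QuotientGroup.mk' (pmOne ℤ)) ⊓
        (Gamma m).map (QuotientGroup.mk' (pmOne ℤ))) = 2 := by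
  have hsplit : ∀ A : SL2 ℤ, A ∈ Gamma (l * m) ↔ CongC l 1 A ∧ CongC m 1 A := fun A => by
    rw [mem_Gamma_iff, CongC_crt hco]
  have hsplitneg : ∀ A : SL2 ℤ, -A ∈ Gamma (l * m) ↔ CongC l (-1) A ∧ CongC m (-1) A :=
    fun A => by rw [neg_mem_Gamma_iff, CongC_crt hco]
  have hle : (Gamma (l * m)).map (QuotientGroup.mk' (pmOne ℤ)) ≤
      (Gamma l).map (QuotientGroup.mk' (pmOne ℤ)) ⊓
        (Gamma m).map (QuotientGroup.mk' (pmOne ℤ)) := by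
    refine le_inf (Subgroup.map_mono ?_) (Subgroup.map_mono ?_)
    · intro A hA; exact (mem_Gamma_iff l A).2 ((hsplit A).1 hA).1
    · intro A hA; exact (mem_Gamma_iff m A).2 ((hsplit A).1 hA).2
  refine ⟨hle, ?_⟩
  obtain ⟨M, hMl, hMm⟩ := exists_M l m hco
  have hMK : QuotientGroup.mk' (pmOne ℤ) M ∈
      (Gamma l).map (QuotientGroup.mk' (pmOne ℤ)) ⊓
        (Gamma m).map (QuotientGroup.mk' (pmOne ℤ)) :=
    Subgroup.mem_inf.mpr ⟨(mem_map_iff _ _).2 (Or.inl ((mem_Gamma_iff l M).2 hMl)),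
      (mem_map_iff _ _).2 (Or.inr ((neg_mem_Gamma_iff m M).2 hMm))⟩
  rw [Subgroup.relIndex, Subgroup.index_eq_two_iff]
  refine ⟨⟨QuotientGroup.mk' (pmOne ℤ) M, hMK⟩, ?_⟩
  rintro ⟨b, hb⟩
  obtain ⟨hbL, hbR⟩ := Subgroup.mem_inf.mp hb
  obtain ⟨B, hBl, rfl⟩ := Subgroup.mem_map.mp hbL
  have hBl' : CongC l 1 B := (mem_Gamma_iff l B).1 hBl
  have hBm2 : CongC m 1 B ∨ CongC m (-1) B := by
    obtain ⟨B', hB'm, hB'⟩ := Subgroup.mem_map.mp hbR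
    rcases (pi_eq_iff B' B).1 hB' with h | h
    · exact Or.inl ((mem_Gamma_iff m B).1 (h ▸ hB'm))
    · refine Or.inr ((neg_mem_Gamma_iff m B).1 ?_)
      rw [show -B = B' by rw [h, neg_neg]]
      exact hB'm
  have h1 : ((⟨QuotientGroup.mk' (pmOne ℤ) B, hb⟩ * ⟨QuotientGroup.mk' (pmOne ℤ) M, hMK⟩ :
      ↥((Gamma l).map (QuotientGroup.mk' (pmOne ℤ)) ⊓
        (Gamma m).map (QuotientGroup.mk' (pmOne ℤ)))) ∈
      ((Gamma (l * m)).map (QuotientGroup.mk' (pmOne ℤ))).subgroupOf _) ↔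
      ((CongC l 1 (B * M) ∧ CongC m 1 (B * M)) ∨
        (CongC l (-1) (B * M) ∧ CongC m (-1) (B * M))) := by
    have h1' : (QuotientGroup.mk' (pmOne ℤ) (B * M) ∈
        (Gamma (l * m)).map (QuotientGroup.mk' (pmOne ℤ))) ↔
        ((CongC l 1 (B * M) ∧ CongC m 1 (B * M)) ∨
          (CongC l (-1) (B * M) ∧ CongC m (-1) (B * M))) := by
      rw [mem_map_iff, hsplit, hsplitneg]
    rw [Subgroup.mem_subgroupOf]
    exact h1'
  have h2 : ((⟨QuotientGroup.mk' (pmOne ℤ) B, hb⟩ :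
      ↥((Gamma l).map (QuotientGroup.mk' (pmOne ℤ)) ⊓
        (Gamma m).map (QuotientGroup.mk' (pmOne ℤ)))) ∈
      ((Gamma (l * m)).map (QuotientGroup.mk' (pmOne ℤ))).subgroupOf _) ↔
      ((CongC l 1 B ∧ CongC m 1 B) ∨ (CongC l (-1) B ∧ CongC m (-1) B)) := by
    have h2' : (QuotientGroup.mk' (pmOne ℤ) B ∈
        (Gamma (l * m)).map (QuotientGroup.mk' (pmOne ℤ))) ↔
        ((CongC l 1 B ∧ CongC m 1 B) ∨ (CongC l (-1) B ∧ CongC m (-1) B)) := by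
      rw [mem_map_iff, hsplit, hsplitneg]
    rw [Subgroup.mem_subgroupOf]
    exact h2'
  have clBM : CongC l 1 (B * M) := by
    have := CongC_mul hBl' hMl; norm_num at this; exact this
  rcases hBm2 with hc | hc
  · refine Or.inr ⟨h2.mpr (Or.inl ⟨hBl', hc⟩), ?_⟩
    intro hP
    have cmBM : CongC m (-1) (B * M) := by
      have := CongC_mul hc hMm; norm_num at this; exact this
    rcases h1.mp hP with ⟨_, h⟩ | ⟨h, _⟩
    · exact CongC_not_both hm h cmBM
    · exact CongC_not_both hl clBM h
  · have cmBM : CongC m 1 (B * M) := by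
      have := CongC_mul hc hMm; norm_num at this; exact this
    refine Or.inl ⟨h1.mpr (Or.inl ⟨clBM, cmBM⟩), ?_⟩
    intro hQ
    rcases h2.mp hQ with ⟨_, h⟩ | ⟨h, _⟩
    · exact CongC_not_both hm h hc
    · exact CongC_not_both hl hBl' h
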